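/- For n ≥ 3 and 1 ≤ k < n/2, set γ = 2(n−k)/(n−2k) and write points of ℝⁿ as (x,y), x ∈ ℝ^{n−k}, y ∈ ℝᵏ, with r = |x|, t = |y|. The function w defined (up to the normalizing constant (γ/2)^{1−k/n}(γ−1)^{1/n}) by w = (r^γ + r^{−γ}t²)/2 when t ≤ r^γ and w = t when t > r^γ is convex on ℝⁿ, and satisfies w(x,y) ≥ c(n,k)|y| for some constant c(n,k) > 0. -/

import Mathlib

open Set

section Aux
variable {E F : Type*} [NormedAddCommGroup E] [NormedSpace ℝ E]
  [NormedAddCommGroup F] [NormedSpace ℝ F]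

lemma aux_norm_rpow_convex {γ : ℝ} (h1 : 1 ≤ γ) :
    ConvexOn ℝ (univ : Set (E × F)) (fun p => ‖p.1‖ ^ γ) := by
  refine ⟨convex_univ, fun p _ q _ θ σ hθ hσ hsum => ?_⟩
  have h0 : (0:ℝ) ≤ γ := le_trans zero_le_one h1
  calc ‖(θ • p + σ • q).1‖ ^ γ = ‖θ • p.1 + σ • q.1‖ ^ γ := rfl
    _ ≤ (θ * ‖p.1‖ + σ * ‖q.1‖) ^ γ := by
        apply Real.rpow_le_rpow (norm_nonneg _) _ h0
        calc ‖θ • p.1 + σ • q.1‖ ≤ ‖θ • p.1‖ + ‖σ • q.1‖ := norm_add_le _ _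
          _ = θ * ‖p.1‖ + σ * ‖q.1‖ := by
              rw [norm_smul, norm_smul, Real.norm_of_nonneg hθ, Real.norm_of_nonneg hσ]
    _ ≤ θ * ‖p.1‖ ^ γ + σ * ‖q.1‖ ^ γ := by
        have := (convexOn_rpow h1).2 (mem_Ici.2 (norm_nonneg p.1))
          (mem_Ici.2 (norm_nonneg q.1)) hθ hσ hsum
        simpa using this

lemma aux_g_convex {γ a : ℝ} (h1 : 1 ≤ γ) (ha0 : 0 ≤ a) (ha1 : a ≤ 1) :
    ConvexOn ℝ (univ : Set (E × F)) (fun p => a * ‖p.2‖ + (1 - a ^ 2) / 2 * ‖p.1‖ ^ γ) := by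
  have hn : ConvexOn ℝ (univ : Set (E × F)) (fun p => ‖p.2‖) := by
    have := (convexOn_norm (convex_univ (𝕜 := ℝ) (E := F))).comp_linearMap
      (LinearMap.snd ℝ E F)
    simpa [Function.comp_def] using this
  have hc : (0:ℝ) ≤ (1 - a ^ 2) / 2 := by nlinarith
  have := (hn.smul ha0).add ((aux_norm_rpow_convex (F := F) h1).smul hc)
  simpa [smul_eq_mul, Pi.add_def] using this

end Aux

theorem stmt_9 (n k : ℕ) (hn : 3 ≤ n) (hk : 1 ≤ k) (hkn : 2 * k < n)
    (γ : ℝ) (hγ : γ = 2 * ((n : ℝ) - k) / ((n : ℝ) - 2 * k))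
    (w : EuclideanSpace ℝ (Fin (n - k)) × EuclideanSpace ℝ (Fin k) → ℝ)
    (hw : ∀ p, ((γ / 2) ^ (1 - (k : ℝ) / n) * (γ - 1) ^ ((1 : ℝ) / n)) * w p =
      if ‖p.2‖ ≤ ‖p.1‖ ^ γ then (‖p.1‖ ^ γ + ‖p.1‖ ^ (-γ) * ‖p.2‖ ^ 2) / 2 else ‖p.2‖) :
    ConvexOn ℝ Set.univ w ∧ ∃ c > (0 : ℝ), ∀ p, c * ‖p.2‖ ≤ w p := by
  have hn3 : (3:ℝ) ≤ (n:ℝ) := by exact_mod_cast hn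
  have hk1 : (1:ℝ) ≤ (k:ℝ) := by exact_mod_cast hk
  have hkn' : 2 * (k:ℝ) < (n:ℝ) := by exact_mod_cast hkn
  have hd : (0:ℝ) < (n:ℝ) - 2 * k := by linarith
  have hγ1 : 1 < γ := by
    rw [hγ, lt_div_iff₀ hd]; linarith
  have hγ0 : (0:ℝ) < γ := by linarith
  set C : ℝ := (γ / 2) ^ (1 - (k : ℝ) / n) * (γ - 1) ^ ((1 : ℝ) / n) with hC
  have hCpos : 0 < C := by
    apply mul_pos
    · exact Real.rpow_pos_of_pos (by linarith) _
    · exact Real.rpow_pos_of_pos (by linarith) _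
  set f : EuclideanSpace ℝ (Fin (n - k)) × EuclideanSpace ℝ (Fin k) → ℝ :=
    fun p => if ‖p.2‖ ≤ ‖p.1‖ ^ γ then (‖p.1‖ ^ γ + ‖p.1‖ ^ (-γ) * ‖p.2‖ ^ 2) / 2 else ‖p.2‖
    with hf
  -- g a ≤ f
  have hglef : ∀ a, 0 ≤ a → a ≤ 1 → ∀ p,
      a * ‖p.2‖ + (1 - a ^ 2) / 2 * ‖p.1‖ ^ γ ≤ f p := by
    intro a ha0 ha1 p
    set r : ℝ := ‖p.1‖
    set t : ℝ := ‖p.2‖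
    have ht : 0 ≤ t := norm_nonneg _
    have hr : 0 ≤ r := norm_nonneg _
    have hR : 0 ≤ r ^ γ := Real.rpow_nonneg hr _
    have hneg : r ^ (-γ) = (r ^ γ)⁻¹ := Real.rpow_neg hr _
    rw [hf]
    show a * t + (1 - a ^ 2) / 2 * r ^ γ ≤ (if t ≤ r ^ γ then (r ^ γ + r ^ (-γ) * t ^ 2) / 2 else t)
    by_cases hcase : t ≤ r ^ γ
    · simp only [hcase, if_true]
      rw [hneg]
      rcases eq_or_lt_of_le hR with hR0 | hRpos
      · have ht0 : t = 0 := le_antisymm (by rw [← hR0] at hcase; exact hcase) ht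
        rw [← hR0, ht0]
        norm_num
      · have hinv : (r ^ γ)⁻¹ * (r ^ γ) = 1 := inv_mul_cancel₀ (ne_of_gt hRpos)
        nlinarith [sq_nonneg (t - a * r ^ γ), mul_pos (inv_pos.2 hRpos) hRpos,
          inv_pos.2 hRpos, sq_nonneg t]
    · simp only [hcase, if_false]
      push_neg at hcase
      nlinarith [mul_nonneg ht (sq_nonneg (1 - a)),
        mul_le_mul_of_nonneg_left hcase.le (by nlinarith : (0:ℝ) ≤ (1 - a ^ 2) / 2)]
  -- f equals g a for a suitable a
  have hfeq : ∀ p, ∃ a, 0 ≤ a ∧ a ≤ 1 ∧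
      f p = a * ‖p.2‖ + (1 - a ^ 2) / 2 * ‖p.1‖ ^ γ := by
    intro p
    set r : ℝ := ‖p.1‖
    set t : ℝ := ‖p.2‖
    have ht : 0 ≤ t := norm_nonneg _
    have hr : 0 ≤ r := norm_nonneg _
    have hR : 0 ≤ r ^ γ := Real.rpow_nonneg hr _
    have hneg : r ^ (-γ) = (r ^ γ)⁻¹ := Real.rpow_neg hr _
    rw [hf]
    show ∃ a, 0 ≤ a ∧ a ≤ 1 ∧ (if t ≤ r ^ γ then (r ^ γ + r ^ (-γ) * t ^ 2) / 2 else t) =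
      a * t + (1 - a ^ 2) / 2 * r ^ γ
    by_cases hcase : t ≤ r ^ γ
    · simp only [hcase, if_true]
      rcases eq_or_lt_of_le hR with hR0 | hRpos
      · refine ⟨0, le_refl 0, zero_le_one, ?_⟩
        have ht0 : t = 0 := le_antisymm (by rw [← hR0] at hcase; exact hcase) ht
        have hR0' : r ^ γ = 0 := hR0.symm
        rw [ht0, hR0']
        norm_num
      · refine ⟨t / r ^ γ, div_nonneg ht hR, (div_le_one hRpos).2 hcase, ?_⟩
        rw [hneg]
        field_simp
        ring
    · simp only [hcase, if_false]
      exact ⟨1, zero_le_one, le_refl 1, by norm_num⟩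
  -- convexity of f
  have hfconv : ConvexOn ℝ (univ : Set _) f := by
    refine ⟨convex_univ, fun p _ q _ θ σ hθ hσ hsum => ?_⟩
    obtain ⟨a, ha0, ha1, hae⟩ := hfeq (θ • p + σ • q)
    calc f (θ • p + σ • q) = a * ‖(θ • p + σ • q).2‖ +
          (1 - a ^ 2) / 2 * ‖(θ • p + σ • q).1‖ ^ γ := hae
      _ ≤ θ * (a * ‖p.2‖ + (1 - a ^ 2) / 2 * ‖p.1‖ ^ γ) +
          σ * (a * ‖q.2‖ + (1 - a ^ 2) / 2 * ‖q.1‖ ^ γ) := by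
          have := (aux_g_convex hγ1.le ha0 ha1).2 (mem_univ p) (mem_univ q) hθ hσ hsum
          simpa using this
      _ ≤ θ * f p + σ * f q := by
          exact add_le_add (mul_le_mul_of_nonneg_left (hglef a ha0 ha1 p) hθ)
            (mul_le_mul_of_nonneg_left (hglef a ha0 ha1 q) hσ)
  have hwf : w = fun p => C⁻¹ * f p := by
    funext p
    have h1 : C * w p = f p := hw p
    rw [← h1]
    field_simp
  constructor
  · rw [hwf]
    have := hfconv.smul (inv_nonneg.2 hCpos.le)
    simpa [smul_eq_mul] using this
  · refine ⟨C⁻¹, inv_pos.2 hCpos, fun p => ?_⟩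
    rw [hwf]
    apply mul_le_mul_of_nonneg_left _ (inv_nonneg.2 hCpos.le)
    have := hglef 1 zero_le_one le_rfl p
    simpa using this
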